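/- Suppose 2 ≤ |A| ≤ M−1, so that δ := log|A|/log M ∈ (0,1), and suppose γ > 0 is such that for every ε > 0 there exists C_ε > 0 with E(C_k) ≤ C_ε·N^{3δ−γ+ε} for all k ≥ 1 (N = M^k). Set β_E := (3/4)(1/2−δ) + γ/8. Then for every ε > 0 there exists C'_ε > 0 such that t_k ≤ C'_ε·N^{−4β_E+ε} for all k ≥ 1. -/

import Mathlib

open scoped BigOperators
open Finset Complex

/-- The Cantor iterates `C_k = {Σ_{j<k} a_j M^j : a_j ∈ A} ⊆ {0,…,M^k-1}`. -/
def Ck (M : ℕ) (A : Finset ℕ) (k : ℕ) : Finset ℕ :=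
  (Fintype.piFinset fun _ : Fin k => A).image fun a => ∑ j : Fin k, a j * M ^ (j : ℕ)

/-- The discrete Fourier transform of the indicator function of `S ⊆ Z_N`,
`F_N(1_S)(m) = N^{-1/2} Σ_{l<N} 1_S(l) exp(-2πi m l / N)`; it is `N`-periodic in `m`,
so a residue `m ∈ Z_N` may be fed in via any integer representative. -/
noncomputable def dftInd (N : ℕ) (S : Finset ℕ) (m : ℕ) : ℂ :=
  ((1 : ℝ) / Real.sqrt N : ℝ) * ∑ l ∈ Finset.range N,
    (if l ∈ S then (1 : ℂ) else 0) * Complex.exp (-(2 * (Real.pi : ℂ) * Complex.I * m * l) / N)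

/-- `t_k = (1/N) Σ_{j,ℓ ∈ Z_N} 1_{C_k}(j) 1_{C_k}(ℓ) |F_N(1_{C_k})(ℓ-j)|²`, `N = M^k`,
where `ℓ - j` is taken in `Z_N` (represented by `ℓ + N - j ≡ ℓ - j (mod N)`). -/
noncomputable def tk (M : ℕ) (A : Finset ℕ) (k : ℕ) : ℝ :=
  ((1 : ℝ) / ((M ^ k : ℕ) : ℝ)) * ∑ j ∈ Finset.range (M ^ k), ∑ l ∈ Finset.range (M ^ k),
    (if j ∈ Ck M A k then (1 : ℝ) else 0) * (if l ∈ Ck M A k then (1 : ℝ) else 0) *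
      ‖dftInd (M ^ k) (Ck M A k) (l + M ^ k - j)‖ ^ 2

/-- The additive energy of `X ⊆ Z_N`. -/
def addE (N : ℕ) (X : Finset ℕ) : ℕ :=
  (((X ×ˢ X) ×ˢ (X ×ˢ X)).filter fun p => (p.1.1 + p.1.2) % N = (p.2.1 + p.2.2) % N).card



noncomputable def eN (N : ℕ) (n : ℤ) : ℂ := Complex.exp (2 * Real.pi * Complex.I * n / N)

lemma eN_add (N : ℕ) (a b : ℤ) : eN N (a + b) = eN N a * eN N b := by
  rw [eN, eN, eN, ← Complex.exp_add]; congr 1; push_cast; ring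

lemma eN_zero (N : ℕ) : eN N 0 = 1 := by simp [eN]

lemma eN_N_mul (N : ℕ) (hN : 0 < N) (a : ℤ) : eN N ((N : ℤ) * a) = 1 := by
  have hNc : (N : ℂ) ≠ 0 := by exact_mod_cast hN.ne'
  rw [eN]
  have : 2 * (Real.pi : ℂ) * Complex.I * ((N : ℤ) * a : ℤ) / N = a * (2 * Real.pi * Complex.I) := by
    push_cast; field_simp
  rw [this, Complex.exp_int_mul_two_pi_mul_I]

lemma eN_nat_mul (N : ℕ) (m : ℕ) (a : ℤ) : eN N (m * a) = eN N a ^ m := by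
  induction m with
  | zero => simp [eN_zero]
  | succ n ih => push_cast; rw [add_mul, one_mul, eN_add, ih, pow_succ]

lemma eN_conj (N : ℕ) (a : ℤ) : (starRingEnd ℂ) (eN N a) = eN N (-a) := by
  rw [eN, eN, ← Complex.exp_conj]; congr 1
  simp only [map_div₀, map_mul, Complex.conj_I, Complex.conj_ofReal, map_ofNat,
    map_intCast, map_natCast]
  push_cast; ring

lemma orth (N : ℕ) (hN : 0 < N) (a : ℤ) :
    ∑ m ∈ Finset.range N, eN N (m * a) = if (N : ℤ) ∣ a then (N : ℂ) else 0 := by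
  by_cases h : (N : ℤ) ∣ a
  · rw [if_pos h]
    obtain ⟨b, rfl⟩ := h
    have : ∀ m ∈ Finset.range N, eN N (m * ((N : ℤ) * b)) = 1 := by
      intro m _
      rw [← mul_assoc, mul_comm (m:ℤ) (N:ℤ), mul_assoc, eN_N_mul N hN]
    rw [Finset.sum_congr rfl this]; simp
  · simp only [h, if_neg, if_false]
    have hz : eN N a ^ N = 1 := by
      rw [← eN_nat_mul, mul_comm ((N:ℕ):ℤ) a]
      rw [show (a * (N:ℤ)) = (N:ℤ) * a by ring, eN_N_mul N hN]
    have hne : eN N a ≠ 1 := by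
      intro he
      rw [eN, Complex.exp_eq_one_iff] at he
      obtain ⟨n, hn⟩ := he
      apply h
      have hNc : (N : ℂ) ≠ 0 := by exact_mod_cast hN.ne'
      have hpi : (2 : ℂ) * Real.pi * Complex.I ≠ 0 := by
        simp [Real.pi_ne_zero, Complex.I_ne_zero, Complex.ofReal_ne_zero]
      refine ⟨n, ?_⟩
      rw [mul_comm]
      have : (a : ℂ) = n * N := by
        field_simp at hn
        rw [hn]; ring
      exact_mod_cast this
    calc ∑ m ∈ Finset.range N, eN N (↑m * a) = ∑ m ∈ Finset.range N, eN N a ^ m := by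
          refine Finset.sum_congr rfl fun m _ => ?_; rw [eN_nat_mul]
      _ = 0 := by
          rw [geom_sum_eq hne, hz]; simp

noncomputable def Sc (N : ℕ) (C : Finset ℕ) (m : ℤ) : ℂ := ∑ x ∈ C, eN N (m * x)

lemma Sc_period (N : ℕ) (hN : 0 < N) (C : Finset ℕ) (m : ℤ) (t : ℤ) :
    Sc N C (m + N * t) = Sc N C m := by
  unfold Sc
  refine Finset.sum_congr rfl fun x _ => ?_
  rw [add_mul, eN_add, show (N:ℤ) * t * x = (N:ℤ) * (t * x) by ring, eN_N_mul N hN, mul_one]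

lemma Sc_conj (N : ℕ) (C : Finset ℕ) (m : ℤ) :
    (starRingEnd ℂ) (Sc N C m) = Sc N C (-m) := by
  unfold Sc
  rw [map_sum]
  refine Finset.sum_congr rfl fun x _ => ?_
  rw [eN_conj]; ring_nf

lemma normSq_Sc_neg (N : ℕ) (C : Finset ℕ) (m : ℤ) :
    Complex.normSq (Sc N C (-m)) = Complex.normSq (Sc N C m) := by
  rw [← Sc_conj, Complex.normSq_conj]

-- fourth moment identity
lemma fourth (N : ℕ) (hN : 0 < N) (C : Finset ℕ) :
    ∑ m ∈ Finset.range N, (Complex.normSq (Sc N C m))^2 = N * addE N C := by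
  have key : ∑ m ∈ Finset.range N, ((Sc N C m)^2 * (starRingEnd ℂ) ((Sc N C m)^2))
      = (N : ℂ) * (addE N C : ℂ) := by
    have expand : ∀ m ∈ Finset.range N, (Sc N C m)^2 * (starRingEnd ℂ) ((Sc N C m)^2)
        = ∑ p ∈ (C ×ˢ C) ×ˢ (C ×ˢ C),
            eN N (m * ((p.1.1 + p.1.2 : ℕ) - ((p.2.1 + p.2.2 : ℕ)) : ℤ)) := by
      intro m _
      have h1 : (Sc N C m)^2 = ∑ p ∈ C ×ˢ C, eN N (m * ((p.1 + p.2 : ℕ) : ℤ)) := by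
        rw [sq, Sc, Finset.sum_mul_sum, Finset.sum_product]
        refine Finset.sum_congr rfl fun x _ => Finset.sum_congr rfl fun y _ => ?_
        rw [← eN_add]; congr 1; push_cast; ring
      have h2 : (starRingEnd ℂ) ((Sc N C m)^2)
          = ∑ q ∈ C ×ˢ C, eN N (-(m * ((q.1 + q.2 : ℕ) : ℤ))) := by
        rw [h1, map_sum]
        exact Finset.sum_congr rfl fun q _ => eN_conj _ _
      rw [h2, h1, Finset.sum_mul_sum]
      rw [Finset.sum_product (s := C ×ˢ C)]
      refine Finset.sum_congr rfl fun p hp => ?_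
      refine Finset.sum_congr rfl fun q hq => ?_
      rw [← eN_add]; congr 1; push_cast; ring
    rw [Finset.sum_congr rfl expand, Finset.sum_comm]
    have inner : ∀ p ∈ (C ×ˢ C) ×ˢ (C ×ˢ C),
        ∑ m ∈ Finset.range N, eN N (m * (((p.1.1 + p.1.2 : ℕ) : ℤ) - ((p.2.1 + p.2.2 : ℕ) : ℤ)))
        = if (p.1.1 + p.1.2) % N = (p.2.1 + p.2.2) % N then (N : ℂ) else 0 := by
      intro p _
      rw [orth N hN]
      congr 1
      rw [eq_comm, ← Nat.modEq_iff_dvd, Nat.ModEq]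
      exact propext eq_comm
    rw [Finset.sum_congr rfl inner, Finset.sum_ite, Finset.sum_const, Finset.sum_const,
      smul_zero, add_zero, addE, nsmul_eq_mul]
    push_cast
    ring
  have lhs_eq : ∀ m ∈ Finset.range N, ((Sc N C m)^2 * (starRingEnd ℂ) ((Sc N C m)^2))
      = ((Complex.normSq (Sc N C m))^2 : ℝ) := by
    intro m _
    rw [Complex.mul_conj, map_pow Complex.normSq]
  rw [Finset.sum_congr rfl lhs_eq] at key
  push_cast at key
  exact_mod_cast key

def dcnt (N : ℕ) (C : Finset ℕ) (s : ℕ) : ℕ :=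
  ((C ×ˢ C).filter fun p => (p.2 + N - p.1) % N = s).card

lemma sum_fiber_sq (N : ℕ) (hN : 0 < N) (P : Finset (ℕ × ℕ)) (v : ℕ × ℕ → ℕ)
    (hv : ∀ p, v p < N) :
    ∑ s ∈ Finset.range N, ((P.filter fun p => v p = s).card)^2
      = ((P ×ˢ P).filter fun r => v r.1 = v r.2).card := by
  rw [Finset.card_eq_sum_card_fiberwise
    (f := fun r => v r.1) (t := Finset.range N)
    (fun r _ => Finset.mem_range.2 (hv r.1))]
  refine Finset.sum_congr rfl fun s _ => ?_
  have : ((P ×ˢ P).filter fun r => v r.1 = v r.2).filter (fun r => v r.1 = s)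
      = (P.filter fun p => v p = s) ×ˢ (P.filter fun p => v p = s) := by
    ext ⟨p, q⟩
    simp only [Finset.mem_filter, Finset.mem_product]
    constructor
    · rintro ⟨⟨⟨hp, hq⟩, heq⟩, hs⟩
      exact ⟨⟨hp, hs⟩, ⟨hq, heq ▸ hs⟩⟩
    · rintro ⟨⟨hp, hs⟩, ⟨hq, hs'⟩⟩
      exact ⟨⟨⟨hp, hq⟩, hs.trans hs'.symm⟩, hs⟩
  rw [this, Finset.card_product, sq]

lemma sum_dcnt_sq (N : ℕ) (hN : 0 < N) (C : Finset ℕ) (hC : ∀ x ∈ C, x < N) :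
    ∑ s ∈ Finset.range N, (dcnt N C s)^2 = addE N C := by
  unfold dcnt
  rw [sum_fiber_sq N hN _ _ (fun p => Nat.mod_lt _ hN)]
  unfold addE
  refine Finset.card_bij (fun r _ => ((r.1.2, r.2.1), (r.2.2, r.1.1))) ?_ ?_ ?_
  · rintro ⟨⟨j, l⟩, ⟨j', l'⟩⟩ hr
    simp only [Finset.mem_filter, Finset.mem_product] at hr ⊢
    obtain ⟨⟨⟨hj, hl⟩, hj', hl'⟩, heq⟩ := hr
    refine ⟨⟨⟨hl, hj'⟩, hl', hj⟩, ?_⟩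
    -- from (l + N - j) % N = (l' + N - j') % N derive (l + j') % N = (l' + j) % N
    have hjN := hC _ hj
    have hj'N := hC _ hj'
    have h1 : (l + N - j + (j + j')) % N = (l' + N - j' + (j + j')) % N :=
      Nat.ModEq.add_right _ heq
    have e1 : l + N - j + (j + j') = l + j' + N := by omega
    have e2 : l' + N - j' + (j + j') = l' + j + N := by omega
    rw [e1, e2] at h1
    have := (Nat.ModEq.add_right_cancel' N h1)
    exact this
  · rintro ⟨⟨j, l⟩, ⟨j', l'⟩⟩ h1 ⟨⟨a, b⟩, ⟨c, d⟩⟩ h2 heq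
    simp only [Prod.mk.injEq] at heq
    obtain ⟨⟨rfl, rfl⟩, rfl, rfl⟩ := heq
    rfl
  · rintro ⟨⟨a, b⟩, ⟨c, d⟩⟩ hr
    refine ⟨((d, a), (b, c)), ?_, rfl⟩
    simp only [Finset.mem_filter, Finset.mem_product] at hr ⊢
    obtain ⟨⟨⟨ha, hb⟩, hc, hd⟩, heq⟩ := hr
    refine ⟨⟨⟨hd, ha⟩, hb, hc⟩, ?_⟩
    have haN := hC _ ha
    have hbN := hC _ hb
    have hcN := hC _ hc
    have hdN := hC _ hd
    -- from (a + b) % N = (c + d) % N derive (a + N - d) % N = (c + N - b) % N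
    have h1 : (a + b + (N - d + (N - b))) % N = (c + d + (N - d + (N - b))) % N :=
      Nat.ModEq.add_right _ heq
    have e1 : a + b + (N - d + (N - b)) = a + N - d + N := by omega
    have e2 : c + d + (N - d + (N - b)) = c + N - b + N := by omega
    rw [e1, e2] at h1
    exact Nat.ModEq.add_right_cancel' N h1

lemma digit_sum_lt (M : ℕ) (hM : 1 ≤ M) : ∀ (k : ℕ) (a : Fin k → ℕ), (∀ j, a j < M) →
    ∑ j : Fin k, a j * M ^ (j : ℕ) < M ^ k := by
  intro k
  induction k with
  | zero => intro a _; simp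
  | succ n ih =>
    intro a ha
    rw [Fin.sum_univ_castSucc]
    have h1 : ∑ j : Fin n, a j.castSucc * M ^ (j : ℕ) < M ^ n :=
      ih (fun j => a j.castSucc) (fun j => ha _)
    have h2 : a (Fin.last n) ≤ M - 1 := by have := ha (Fin.last n); omega
    have h3 : a (Fin.last n) * M ^ n ≤ (M - 1) * M ^ n := Nat.mul_le_mul_right _ h2
    have h4 : M ^ (n + 1) = M ^ n + (M - 1) * M ^ n := by
      have : M ^ (n+1) = M * M ^ n := by ring
      rw [this]; cases' M with m; · omega
      simp [Nat.succ_sub_one, Nat.succ_mul, Nat.add_mul]; ring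
    simp only [Fin.val_last, Fin.coe_castSucc] at *
    omega

lemma Ck_lt (M : ℕ) (hM : 1 ≤ M) (A : Finset ℕ) (hA : A ⊆ Finset.range M) (k : ℕ) :
    ∀ x ∈ Ck M A k, x < M ^ k := by
  intro x hx
  rw [Ck, Finset.mem_image] at hx
  obtain ⟨a, ha, rfl⟩ := hx
  rw [Fintype.mem_piFinset] at ha
  exact digit_sum_lt M hM k a fun j => Finset.mem_range.1 (hA (ha j))

lemma dft_norm_sq (N : ℕ) (hN : 0 < N) (C : Finset ℕ) (hC : ∀ x ∈ C, x < N) (n : ℕ) :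
    ‖dftInd N C n‖ ^ 2 = Complex.normSq (Sc N C ((n % N : ℕ) : ℤ)) / N := by
  have hsum : ∑ l ∈ Finset.range N,
      (if l ∈ C then (1 : ℂ) else 0) * Complex.exp (-(2 * (Real.pi : ℂ) * Complex.I * n * l) / N)
      = Sc N C (-(n : ℤ)) := by
    rw [Sc]
    rw [← Finset.sum_filter_of_ne (f := fun l =>
      (if l ∈ C then (1 : ℂ) else 0) * Complex.exp (-(2 * (Real.pi : ℂ) * Complex.I * n * l) / N))
      (p := fun l => l ∈ C)]
    · have hfil : (Finset.range N).filter (fun l => l ∈ C) = C := by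
        ext x; simp only [Finset.mem_filter, Finset.mem_range]
        exact ⟨fun h => h.2, fun h => ⟨hC x h, h⟩⟩
      rw [hfil]
      refine Finset.sum_congr rfl fun x hx => ?_
      rw [if_pos hx, one_mul, eN]
      congr 1
      push_cast; ring
    · intro x _ hne
      by_contra h
      exact hne (by rw [if_neg h, zero_mul])
  rw [dftInd, hsum]
  rw [norm_mul, mul_pow]
  have h1 : ‖(((1 : ℝ) / Real.sqrt N : ℝ) : ℂ)‖ ^ 2 = 1 / N := by
    rw [Complex.norm_real, Real.norm_eq_abs, _root_.sq_abs, div_pow, one_pow,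
      Real.sq_sqrt (Nat.cast_nonneg N)]
  rw [h1]
  have hSc : Sc N C ((n : ℤ)) = Sc N C ((n % N : ℕ) : ℤ) := by
    have hrep : (n : ℤ) = ((n % N : ℕ) : ℤ) + (N : ℤ) * ((n / N : ℕ) : ℤ) := by
      push_cast
      rw [mul_comm]
      exact (Int.emod_add_ediv_mul (n : ℤ) N).symm
    rw [hrep, Sc_period N hN]
  have h2 : ‖Sc N C (-(n : ℤ))‖ ^ 2 = Complex.normSq (Sc N C ((n % N : ℕ) : ℤ)) := by
    rw [Complex.sq_norm, normSq_Sc_neg, hSc]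
  rw [h2]; ring

lemma tk_le (M : ℕ) (hM : 2 ≤ M) (A : Finset ℕ) (hA : A ⊆ Finset.range M) (k : ℕ) :
    tk M A k ≤ (addE (M ^ k) (Ck M A k) : ℝ) * Real.sqrt (M ^ k : ℕ)
      / ((M ^ k : ℕ) : ℝ) ^ 2 := by
  set N := M ^ k with hNdef
  set C := Ck M A k with hCdef
  have hN : 0 < N := Nat.pow_pos (by omega)
  have hC : ∀ x ∈ C, x < N := Ck_lt M (by omega) A hA k
  have hNR : (0:ℝ) < (N:ℝ) := by exact_mod_cast hN
  set T : ℝ := ∑ s ∈ Finset.range N, (dcnt N C s : ℝ) * Complex.normSq (Sc N C s) with hT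
  -- step 1: rewrite tk as T / N^2
  have step1 : tk M A k = T / (N:ℝ)^2 := by
    rw [tk]
    simp only [← hNdef, ← hCdef]
    have inner_eq : ∀ j ∈ Finset.range N, ∀ l ∈ Finset.range N,
        (if j ∈ C then (1:ℝ) else 0) * (if l ∈ C then (1:ℝ) else 0) *
          ‖dftInd N C (l + N - j)‖ ^ 2
        = if j ∈ C then (if l ∈ C then Complex.normSq (Sc N C (((l + N - j) % N : ℕ) : ℤ)) / N
            else 0) else 0 := by
      intro j _ l _
      rw [dft_norm_sq N hN C hC]
      split_ifs <;> ring
    rw [Finset.sum_congr rfl fun j hj => Finset.sum_congr rfl fun l hl => inner_eq j hj l hl]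
    have hsub : C ⊆ Finset.range N := fun x hx => Finset.mem_range.2 (hC x hx)
    have collapse : ∀ (g : ℕ → ℕ → ℝ),
        (∑ j ∈ Finset.range N, ∑ l ∈ Finset.range N,
          (if j ∈ C then (if l ∈ C then g j l else 0) else 0))
        = ∑ j ∈ C, ∑ l ∈ C, g j l := by
      intro g
      rw [← Finset.sum_subset hsub
        (fun x _ hx => Finset.sum_eq_zero fun l _ => if_neg hx)]
      refine Finset.sum_congr rfl fun j hj => ?_
      rw [← Finset.sum_subset hsub (fun x _ hx => by rw [if_pos ?_, if_neg hx]; exact hj)]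
      exact Finset.sum_congr rfl fun l hl => by rw [if_pos hj, if_pos hl]
    rw [collapse]
    have fiber : ∑ j ∈ C, ∑ l ∈ C,
        Complex.normSq (Sc N C (((l + N - j) % N : ℕ) : ℤ)) / (N:ℝ)
        = T / (N:ℝ) := by
      rw [← Finset.sum_product', ← Finset.sum_div]
      congr 1
      rw [hT]
      rw [← Finset.sum_fiberwise_of_maps_to'
        (g := fun p : ℕ × ℕ => (p.2 + N - p.1) % N) (t := Finset.range N)
        (fun p _ => Finset.mem_range.2 (Nat.mod_lt _ hN))
        (fun s => (Complex.normSq (Sc N C ((s : ℕ) : ℤ)) : ℝ))]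
      refine Finset.sum_congr rfl fun s _ => ?_
      rw [Finset.sum_const, nsmul_eq_mul, dcnt]
    rw [fiber, div_mul_div_comm, one_mul, sq]
  rw [step1]
  -- step 2: Cauchy-Schwarz
  have hTnn : 0 ≤ T := Finset.sum_nonneg fun s _ =>
    mul_nonneg (Nat.cast_nonneg _) (Complex.normSq_nonneg _)
  have cs := Finset.sum_mul_sq_le_sq_mul_sq (Finset.range N)
    (fun s => (dcnt N C s : ℝ)) (fun s => Complex.normSq (Sc N C s))
  have hd2 : ∑ s ∈ Finset.range N, ((dcnt N C s : ℝ))^2 = (addE N C : ℝ) := by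
    exact_mod_cast congrArg (Nat.cast (R := ℝ)) (sum_dcnt_sq N hN C hC)
  have hg2 : ∑ s ∈ Finset.range N, (Complex.normSq (Sc N C s))^2
      = (N : ℝ) * (addE N C : ℝ) := fourth N hN C
  rw [hd2, hg2, ← hT] at cs
  have hTle : T ≤ (addE N C : ℝ) * Real.sqrt N := by
    have h1 : T = Real.sqrt (T^2) := (Real.sqrt_sq hTnn).symm
    rw [h1]
    have h2 : Real.sqrt (T^2) ≤ Real.sqrt ((addE N C : ℝ) * ((N:ℝ) * (addE N C : ℝ))) :=
      Real.sqrt_le_sqrt cs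
    refine h2.trans (le_of_eq ?_)
    rw [show (addE N C : ℝ) * ((N:ℝ) * (addE N C : ℝ)) = ((addE N C : ℝ))^2 * (N:ℝ) by ring,
      Real.sqrt_mul (sq_nonneg _), Real.sqrt_sq (Nat.cast_nonneg _)]
  have hpos : (0:ℝ) < (N:ℝ)^2 := by positivity
  exact (div_le_div_iff_of_pos_right hpos).2 hTle


/-- If `2 ≤ |A| ≤ M-1` (so `δ = log|A|/log M ∈ (0,1)`) and `γ > 0` is such
that `E(C_k) ≤ C_ε N^{3δ-γ+ε}` for all `k ≥ 1` and every `ε > 0`, then with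
`β_E = (3/4)(1/2-δ) + γ/8`, for every `ε > 0` there is `C'_ε > 0` with
`t_k ≤ C'_ε N^{-4β_E+ε}` for all `k ≥ 1`. -/
theorem stmt8 (M : ℕ) (hM : 2 ≤ M) (A : Finset ℕ) (hA : A ⊆ Finset.range M)
    (hA2 : 2 ≤ A.card) (hAM : A.card ≤ M - 1) (γ : ℝ) (hγ : 0 < γ)
    (hE : ∀ ε : ℝ, 0 < ε → ∃ Cε : ℝ, 0 < Cε ∧ ∀ k : ℕ, 1 ≤ k →
      ((addE (M ^ k) (Ck M A k) : ℕ) : ℝ) ≤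
        Cε * ((M ^ k : ℕ) : ℝ) ^ (3 * (Real.log A.card / Real.log M) - γ + ε)) :
    ∀ ε : ℝ, 0 < ε → ∃ Cε' : ℝ, 0 < Cε' ∧ ∀ k : ℕ, 1 ≤ k →
      tk M A k ≤ Cε' * ((M ^ k : ℕ) : ℝ) ^
        (-4 * ((3 / 4) * (1 / 2 - Real.log A.card / Real.log M) + γ / 8) + ε) := by
  intro ε hε
  obtain ⟨Cε, hCε, hbound⟩ := hE ε hε
  refine ⟨Cε, hCε, fun k hk => ?_⟩
  set δ := Real.log A.card / Real.log M with hδ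
  set N := M ^ k with hNdef
  have hN : 0 < N := Nat.pow_pos (by omega)
  have hNpos : (0:ℝ) < (N:ℝ) := by exact_mod_cast hN
  have hN1 : (1:ℝ) ≤ (N:ℝ) := by
    have : 1 ≤ N := hN
    exact_mod_cast this
  have h1 := tk_le M hM A hA k
  have h2 := hbound k hk
  have hrw : Real.sqrt (N:ℕ) / ((N:ℕ):ℝ)^2 = ((N:ℕ):ℝ) ^ (-(3/2) : ℝ) := by
    rw [Real.sqrt_eq_rpow, ← Real.rpow_natCast ((N:ℕ):ℝ) 2, ← Real.rpow_sub hNpos]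
    norm_num
  have h3 : tk M A k ≤ (addE N (Ck M A k) : ℝ) * ((N:ℕ):ℝ) ^ (-(3/2) : ℝ) := by
    calc tk M A k ≤ (addE N (Ck M A k) : ℝ) * Real.sqrt (N:ℕ) / ((N:ℕ):ℝ)^2 := h1
      _ = (addE N (Ck M A k) : ℝ) * (Real.sqrt (N:ℕ) / ((N:ℕ):ℝ)^2) := by ring
      _ = _ := by rw [hrw]
  have h4 : tk M A k ≤ Cε * ((N:ℕ):ℝ) ^ (3 * δ - γ + ε) * ((N:ℕ):ℝ) ^ (-(3/2) : ℝ) :=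
    h3.trans (mul_le_mul_of_nonneg_right h2 (Real.rpow_nonneg hNpos.le _))
  have h5 : Cε * ((N:ℕ):ℝ) ^ (3 * δ - γ + ε) * ((N:ℕ):ℝ) ^ (-(3/2) : ℝ)
      = Cε * ((N:ℕ):ℝ) ^ (3 * δ - γ + ε + -(3/2)) := by
    rw [mul_assoc, ← Real.rpow_add hNpos]
  have h6 : ((N:ℕ):ℝ) ^ (3 * δ - γ + ε + -(3/2))
      ≤ ((N:ℕ):ℝ) ^ (-4 * ((3 / 4) * (1 / 2 - δ) + γ / 8) + ε) :=
    Real.rpow_le_rpow_of_exponent_le hN1 (by linarith)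
  calc tk M A k ≤ Cε * ((N:ℕ):ℝ) ^ (3 * δ - γ + ε + -(3/2)) := by rw [← h5]; exact h4
    _ ≤ Cε * ((N:ℕ):ℝ) ^ (-4 * ((3 / 4) * (1 / 2 - δ) + γ / 8) + ε) :=
      mul_le_mul_of_nonneg_left h6 hCε.le
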